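/- Let α ∈ P¹(F_{3^n}) \ {−1, 1, ∞} and let β = ψ(α) ∈ F_{3^n}*. Then α is θ-periodic of period k if and only if β has odd multiplicative order d > 1 or d = 1, and k equals the multiplicative order of −2 in (Z/dZ)*, where d = ord(β). In particular, α is θ-periodic if and only if the multiplicative order of ψ(α) is odd. -/

import Mathlib

open OnePoint

variable (F : Type*) [Field F] [DecidableEq F]

/-- The map `θ(x) = x + x⁻¹`, with `θ(0) = θ(∞) = ∞`. -/
def theta : OnePoint F → OnePoint F
  | Option.some x => if x = 0 then ∞ else Option.some (x + x⁻¹)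
  | Option.none => ∞

/-- The inverse-square map `s(x) = x⁻²`, with `s(0) = ∞`, `s(∞) = 0`. -/
def sMap : OnePoint F → OnePoint F
  | Option.some x => if x = 0 then ∞ else Option.some (x⁻¹ ^ 2)
  | Option.none => Option.some 0

/-- The involution `ψ(x) = (x+1)/(x-1)`, with `ψ(1) = ∞`, `ψ(∞) = 1`. -/
def psi : OnePoint F → OnePoint F
  | Option.some x => if x = 1 then ∞ else Option.some ((x + 1) / (x - 1))
  | Option.none => Option.some 1

variable {F}

lemma coe_def (a : F) : (a : OnePoint F) = Option.some a := rfl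

lemma psi_some (a : F) : psi F (Option.some a) = if a = 1 then ∞ else Option.some ((a + 1) / (a - 1)) := rfl
lemma sMap_some (a : F) : sMap F (Option.some a) = if a = 0 then ∞ else Option.some (a⁻¹ ^ 2) := rfl
lemma theta_some (a : F) : theta F (Option.some a) = if a = 0 then ∞ else Option.some (a + a⁻¹) := rfl

lemma sMap_infty : sMap F ∞ = Option.some 0 := rfl

lemma psi_psi (h3 : (3:F) = 0) (x : OnePoint F) : psi F (psi F x) = x := by
  have h2 : (2:F) ≠ 0 := by
    intro h; have : (1:F) = 0 := by linear_combination h3 - h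
    exact one_ne_zero this
  cases x with
  | infty => simp [psi, coe_def]
  | coe a =>
    rw [coe_def]
    by_cases ha : a = 1
    · subst ha; simp [psi, coe_def]; rfl
    · erw [psi_some, if_neg ha, psi_some]
      have hne : (a + 1) / (a - 1) ≠ 1 := by
        intro h
        rw [div_eq_one_iff_eq (sub_ne_zero.mpr ha)] at h
        apply h2; linear_combination h
      erw [if_neg hne]
      congr 1
      have hd : a - 1 ≠ 0 := sub_ne_zero.mpr ha
      field_simp
      rw [div_eq_iff (by ring_nf; exact h2)]
      ring

lemma conj (h3 : (3:F) = 0) (x : OnePoint F) : psi F (theta F x) = sMap F (psi F x) := by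
  have h2 : (2:F) ≠ 0 := by
    intro h; have : (1:F) = 0 := by linear_combination h3 - h
    exact one_ne_zero this
  have hm1 : (-1 : F) ≠ 0 := by simp
  cases x with
  | infty => simp [psi, theta, sMap, coe_def]; rfl
  | coe a =>
    rw [coe_def]
    by_cases ha0 : a = 0
    · subst ha0
      erw [theta_some, if_pos rfl, psi_some, if_neg (zero_ne_one), sMap_some]
      have : ((0:F) + 1)/(0 - 1) = -1 := by norm_num
      erw [this, if_neg hm1]
      simp [psi]; rfl
    by_cases ham : a = -1
    · subst ham
      have h1 : (-1 : F) + (-1)⁻¹ = 1 := by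
        rw [show ((-1:F))⁻¹ = -1 by norm_num]
        linear_combination -h3
      erw [theta_some, if_neg hm1, h1, psi_some, if_pos rfl, psi_some,
        if_neg (by intro h; exact h2 (by linear_combination -h)),
        show ((-1:F)+1)/(-1-1) = 0 by norm_num, sMap_some, if_pos rfl]
    · -- a ≠ 0, a ≠ -1
      have ha1 : a ≠ 1 → True := fun _ => trivial
      have hap1 : a + 1 ≠ 0 := fun h => ham (by linear_combination h)
      have hinv : a * a⁻¹ = 1 := mul_inv_cancel₀ ha0
      have hth : a + a⁻¹ ≠ 1 := by
        intro h
        have h2' : (a + 1)^2 = 0 := by linear_combination a*h - hinv + a*h3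
        exact hap1 (by simpa using pow_eq_zero_iff (n := 2) (by norm_num) |>.mp h2')
      erw [theta_some, if_neg ha0, psi_some, if_neg hth]
      by_cases ha1' : a = 1
      · subst ha1'
        erw [psi_some, if_pos rfl]
        have : (1:F) + 1⁻¹ = 2 := by norm_num
        rw [this, show ((2:F)+1)/(2-1) = 0 by rw [show (2:F)+1 = 3 by norm_num, h3]; simp, sMap_infty]
      · erw [psi_some, if_neg ha1', sMap_some,
          if_neg (div_ne_zero hap1 (sub_ne_zero.mpr ha1'))]
        congr 1
        have hd1 : a - 1 ≠ 0 := sub_ne_zero.mpr ha1'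
        have hth0 : a + a⁻¹ - 1 ≠ 0 := sub_ne_zero.mpr hth
        have key : (a + a⁻¹ + 1)/(a + a⁻¹ - 1) = (a-1)^2/(a+1)^2 := by
          rw [div_eq_div_iff hth0 (pow_ne_zero 2 hap1)]
          linear_combination 4*hinv + (2*a^2 + 2)*h3
        rw [key, inv_div, div_pow]

lemma sMap_iter (b : F) (hb : b ≠ 0) (j : ℕ) :
    (sMap F)^[j] (Option.some b) = Option.some (b ^ ((-2:ℤ)^j)) := by
  induction j with
  | zero => simp; rfl
  | succ j ih =>
    erw [Function.iterate_succ_apply', ih, sMap_some,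
      if_neg (zpow_ne_zero _ hb)]
    congr 1
    rw [← zpow_natCast ((b ^ ((-2:ℤ)^j))⁻¹) 2, ← zpow_neg, ← zpow_mul]
    congr 1
    push_cast
    ring

lemma zpow_eq_self_iff (b : F) (hb : b ≠ 0) (e : ℤ) :
    b ^ e = b ↔ ((orderOf b : ℤ)) ∣ (e - 1) := by
  have key := orderOf_dvd_sub_iff_zpow_eq_zpow (x := Units.mk0 b hb) (a := e) (b := 1)
  rw [zpow_one] at key
  have ho : orderOf (Units.mk0 b hb) = orderOf b := by
    rw [← orderOf_units, Units.val_mk0]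
  rw [ho] at key
  rw [key, Units.ext_iff, Units.val_zpow_eq_zpow_val, Units.val_mk0]

lemma period_iff (h3 : (3:F) = 0) (α : OnePoint F) (b : F)
    (hb : psi F α = Option.some b) (hb0 : b ≠ 0) (j : ℕ) :
    (theta F)^[j] α = α ↔ ((-2 : ZMod (orderOf b))^j = 1) := by
  have hsc : Function.Semiconj (psi F) (theta F) (sMap F) := fun x => conj h3 x
  have hscj := hsc.iterate_right j
  have hinj : Function.Injective (psi F) :=
    Function.LeftInverse.injective (g := psi F) (psi_psi h3)
  have step1 : (theta F)^[j] α = α ↔ (sMap F)^[j] (Option.some b) = Option.some b := by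
    rw [← hb, ← hscj α]
    exact ⟨fun h => congrArg _ h, fun h => hinj h⟩
  erw [step1, sMap_iter b hb0 j, Option.some_inj, zpow_eq_self_iff b hb0,
    ← ZMod.intCast_zmod_eq_zero_iff_dvd]
  push_cast
  rw [sub_eq_zero]

lemma even_no_pow (d : ℕ) (hd : Even d) (j : ℕ) (hj : 0 < j)
    (h : (-2 : ZMod d)^j = 1) : False := by
  have h2d : (2:ℕ) ∣ d := hd.two_dvd
  have h' := congrArg (ZMod.castHom h2d (ZMod 2)) h
  rw [map_pow, map_one, map_neg, map_ofNat] at h'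
  rw [show (-(2:ZMod 2)) = 0 by decide, zero_pow hj.ne'] at h'
  exact zero_ne_one h'

lemma unit_neg_two (d : ℕ) (hd0 : 0 < d) (hd : Odd d) : IsUnit (-2 : ZMod d) := by
  haveI : NeZero d := ⟨hd0.ne'⟩
  have h2 : IsUnit ((2:ℕ) : ZMod d) := by
    rw [ZMod.isUnit_iff_coprime]
    exact Nat.coprime_two_left.mpr hd
  simpa using h2.neg

variable (F)

theorem theta_period_eq_order [Fintype F] (n : ℕ) (hn : 0 < n)
    (hF : Fintype.card F = 3 ^ n)
    (α : OnePoint F) (hα1 : α ≠ ((1 : F) : OnePoint F))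
    (hα2 : α ≠ ((-1 : F) : OnePoint F)) (hα3 : α ≠ ∞)
    (b : F) (hb : psi F α = (b : OnePoint F)) (k : ℕ) (hk : 0 < k) :
    ((Function.IsPeriodicPt (theta F) k α ∧
        ∀ j : ℕ, 0 < j → Function.IsPeriodicPt (theta F) j α → k ≤ j) ↔
      (Odd (orderOf b) ∧ k = orderOf (-2 : ZMod (orderOf b)))) ∧
    ((∃ m : ℕ, 0 < m ∧ (theta F)^[m] α = α) ↔ Odd (orderOf b)) := by
  classical
  have h3 : (3 : F) = 0 := by
    obtain ⟨p, hchar⟩ := CharP.exists F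
    haveI := hchar
    obtain ⟨m, hp, hcard⟩ := FiniteField.card F p
    have hdvd : p ∣ 3 ^ n := by
      rw [← hF, hcard]
      exact dvd_pow_self p (by exact_mod_cast m.ne_zero)
    have hp3 : p = 3 :=
      (Nat.prime_dvd_prime_iff_eq hp (by norm_num)).mp (hp.dvd_of_dvd_pow hdvd)
    subst hp3
    exact CharP.cast_eq_zero F 3
  have hb0 : b ≠ 0 := by
    cases α with
    | infty => exact absurd rfl hα3
    | coe a =>
      have ha1 : a ≠ 1 := fun h => hα1 (by rw [h])
      erw [coe_def, psi_some, if_neg ha1, coe_def] at hb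
      have hbval : (a + 1) / (a - 1) = b := Option.some_inj.mp hb
      intro hb00
      rw [hb00] at hbval
      rcases div_eq_zero_iff.mp hbval with h | h
      · exact hα2 (by rw [eq_neg_of_add_eq_zero_left h])
      · exact ha1 (sub_eq_zero.mp h)
  have hd0 : 0 < orderOf b := by
    rw [show b = ((Units.mk0 b hb0 : Fˣ) : F) from rfl, orderOf_units]
    exact orderOf_pos _
  set d := orderOf b with hd
  have key : ∀ j : ℕ, (theta F)^[j] α = α ↔ (-2 : ZMod d)^j = 1 :=
    fun j => period_iff h3 α b hb hb0 j
  have hOA : Odd d → 0 < orderOf (-2 : ZMod d) := by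
    intro hodd
    haveI : NeZero d := ⟨hd0.ne'⟩
    have hu := unit_neg_two d hd0 hodd
    rw [← hu.unit_spec, orderOf_units]
    exact orderOf_pos _
  constructor
  · constructor
    · rintro ⟨hper, hmin⟩
      have h1 : (-2 : ZMod d)^k = 1 := (key k).mp hper
      have hodd : Odd d := by
        by_contra h
        exact even_no_pow d (Nat.not_odd_iff_even.mp h) k hk h1
      refine ⟨hodd, ?_⟩
      have hdvd : orderOf (-2 : ZMod d) ∣ k := orderOf_dvd_iff_pow_eq_one.mpr h1
      have hle : k ≤ orderOf (-2 : ZMod d) :=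
        hmin _ (hOA hodd) ((key _).mpr (pow_orderOf_eq_one _))
      have hge := Nat.le_of_dvd hk hdvd
      omega
    · rintro ⟨hodd, hko⟩
      refine ⟨(key k).mpr (by rw [hko]; exact pow_orderOf_eq_one _), ?_⟩
      intro j hj hjp
      have hdvd : orderOf (-2 : ZMod d) ∣ j :=
        orderOf_dvd_iff_pow_eq_one.mpr ((key j).mp hjp)
      rw [hko]
      exact Nat.le_of_dvd hj hdvd
  · constructor
    · rintro ⟨m, hm, hmp⟩
      by_contra h
      exact even_no_pow d (Nat.not_odd_iff_even.mp h) m hm ((key m).mp hmp)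
    · intro hodd
      exact ⟨orderOf (-2 : ZMod d), hOA hodd, (key _).mpr (pow_orderOf_eq_one _)⟩
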